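/- For each integer d ≥ 3 and λ ≥ 0, define L_d(λ) = max_{m ∈ (0,1]} m^d ( λ + √(2d/(d−1)) · √(M(1+M)) ) with M = M(m) = (d−1)(1−m²)/m². If λ_d ≥ 0 is any sequence with λ_d = √(2 log d) + o(√(log d)) as d → ∞ (equivalently λ_d/√(2 log d) → 1), then liminf_{d→∞} ( L_d(λ_d)² − λ_d² ) ≥ 2. -/

import Mathlib

open Filter

noncomputable section

/-- `M(m) = (d-1)(1-m²)/m²`. -/
def Mfun (d : ℕ) (m : ℝ) : ℝ := ((d:ℝ) - 1) * (1 - m^2) / m^2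

/-- `L_d(λ) = max_{m ∈ (0,1]} m^d (λ + √(2d/(d-1)) √(M(1+M)))`. -/
def Lfun (d : ℕ) (lam : ℝ) : ℝ :=
  ⨆ m : Set.Ioc (0:ℝ) 1,
    (m.1)^d * (lam + Real.sqrt (2*(d:ℝ)/((d:ℝ)-1)) *
      Real.sqrt (Mfun d m.1 * (1 + Mfun d m.1)))

lemma log_ge_two (d : ℕ) (hd : 8 ≤ d) : 2 ≤ Real.log d := by
  have h8 : (8:ℝ) ≤ d := by exact_mod_cast hd
  rw [Real.le_log_iff_exp_le (by linarith)]
  have h := Real.exp_one_lt_d9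
  have : Real.exp 2 = Real.exp 1 ^ 2 := by
    rw [← Real.exp_nat_mul]; norm_num
  nlinarith [Real.exp_pos 1]

set_option maxHeartbeats 1000000 in
lemma aux_lower (d : ℕ) (hd : 8 ≤ d) (lam : ℝ) (hlam : 0 ≤ lam) :
    (1 - (1/(2*Real.log d) + 1/(Real.log d)^2)) *
      (lam + 2*Real.sqrt (1-1/(d:ℝ))/Real.sqrt (2*Real.log d)) ≤ Lfun d lam := by
  have hd8 : (8:ℝ) ≤ d := by exact_mod_cast hd
  have hdpos : (0:ℝ) < d := by linarith
  obtain ⟨ld, hldef⟩ : ∃ ld, ld = Real.log d := ⟨_, rfl⟩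
  have hld : 2 ≤ ld := hldef ▸ log_ge_two d hd
  have hldpos : 0 < ld := by linarith
  rw [← hldef]
  obtain ⟨x, hxdef⟩ : ∃ x : ℝ, x = 1/(d*ld) := ⟨_, rfl⟩
  have hx0 : 0 < x := by rw [hxdef]; positivity
  have hx1 : x ≤ 1/16 := by
    rw [hxdef, div_le_div_iff₀ (by positivity) (by norm_num)]
    nlinarith
  obtain ⟨m, hmdef⟩ : ∃ m : ℝ, m = Real.sqrt (1-x) := ⟨_, rfl⟩
  have hm2 : m^2 = 1 - x := by rw [hmdef]; exact Real.sq_sqrt (by linarith)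
  have hm0 : 0 < m := by rw [hmdef]; exact Real.sqrt_pos.mpr (by linarith)
  have hm1 : m ≤ 1 := by
    rw [hmdef]
    exact (Real.sqrt_le_sqrt (by linarith : 1-x ≤ 1)).trans (by rw [Real.sqrt_one])
  have hmem : m ∈ Set.Ioc (0:ℝ) 1 := ⟨hm0, hm1⟩
  have hc0 : (0:ℝ) ≤ Real.sqrt (2*(d:ℝ)/((d:ℝ)-1)) := Real.sqrt_nonneg _
  have hL : Lfun d lam = ⨆ p : Set.Ioc (0:ℝ) 1,
      (p.1)^d * (lam + Real.sqrt (2*(d:ℝ)/((d:ℝ)-1)) *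
        Real.sqrt (Mfun d p.1 * (1 + Mfun d p.1))) := rfl
  -- boundedness
  have hbdd : BddAbove (Set.range (fun p : Set.Ioc (0:ℝ) 1 =>
      (p.1)^d * (lam + Real.sqrt (2*(d:ℝ)/((d:ℝ)-1)) *
        Real.sqrt (Mfun d p.1 * (1 + Mfun d p.1))))) := by
    refine ⟨lam + Real.sqrt (2*(d:ℝ)/((d:ℝ)-1)) * d, ?_⟩
    rintro _ ⟨⟨t, ht0, ht1⟩, rfl⟩
    simp only
    have ht2 : 0 ≤ 1 - t^2 := by nlinarith
    have hM0 : 0 ≤ Mfun d t := by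
      rw [Mfun]
      exact div_nonneg (mul_nonneg (by linarith) ht2) (by positivity)
    have hsq : Real.sqrt (Mfun d t * (1 + Mfun d t)) ≤ 1 + Mfun d t := by
      calc Real.sqrt (Mfun d t * (1 + Mfun d t)) ≤ Real.sqrt ((1+Mfun d t)^2) :=
            Real.sqrt_le_sqrt (by nlinarith)
        _ = 1 + Mfun d t := Real.sqrt_sq (by linarith)
    have htd : t^d ≤ 1 := pow_le_one₀ ht0.le ht1
    have htd0 : 0 ≤ t^d := by positivity
    have hkey : t^d * (1 + Mfun d t) ≤ d := by
      have hsplit : t^d = t^(d-2) * t^2 := by rw [← pow_add]; congr 1; omega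
      have h2 : t^d * Mfun d t = ((d:ℝ)-1) * (1-t^2) * t^(d-2) := by
        rw [Mfun, hsplit]; field_simp
      have h3 : t^(d-2) ≤ 1 := pow_le_one₀ ht0.le ht1
      have h4 : ((d:ℝ)-1) * (1-t^2) * t^(d-2) ≤ ((d:ℝ)-1) := by
        nlinarith [pow_nonneg ht0.le (d-2)]
      nlinarith
    have hs0 : 0 ≤ Real.sqrt (Mfun d t * (1 + Mfun d t)) := Real.sqrt_nonneg _
    nlinarith [mul_le_mul_of_nonneg_left hkey hc0,
      mul_le_mul_of_nonneg_left (mul_le_mul_of_nonneg_left hsq hc0) htd0]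
  have hsup := le_ciSup hbdd ⟨m, hmem⟩
  simp only at hsup
  rw [← hL] at hsup
  -- facts about Mfun d m
  have hMm : Mfun d m = ((d:ℝ)-1) * x / (1-x) := by rw [Mfun, hm2]; ring_nf
  have hMge : ((d:ℝ)-1) * x ≤ Mfun d m := by
    rw [hMm, le_div_iff₀ (by linarith)]
    nlinarith [mul_nonneg (mul_nonneg (by linarith : (0:ℝ) ≤ (d:ℝ)-1) hx0.le) hx0.le]
  have hM0 : 0 ≤ Mfun d m := le_trans (by nlinarith) hMge
  -- (i)  1 - δ ≤ m^d
  obtain ⟨y, hydef⟩ : ∃ y : ℝ, y = 1/ld := ⟨_, rfl⟩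
  have hy0 : 0 < y := by rw [hydef]; positivity
  have hy2 : y ≤ 1/2 := by rw [hydef, div_le_div_iff₀ hldpos (by norm_num)]; linarith
  have hmd : 1 - (y/2 + y^2) ≤ m^d := by
    have hdx : (d:ℝ) * x = y := by rw [hxdef, hydef]; field_simp
    have hbern : 1 - y ≤ (1-x)^d := by
      have := one_add_mul_le_pow (a := -x) (by linarith) d
      rw [show (1:ℝ) + -x = 1 - x by ring] at this
      nlinarith
    have hmd2 : m^d = Real.sqrt ((1-x)^d) := by
      rw [show (1-x)^d = (m^d)^2 by rw [← pow_mul, mul_comm d 2, pow_mul, hm2],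
        Real.sqrt_sq (pow_nonneg hm0.le d)]
    rw [hmd2]
    calc 1 - (y/2 + y^2) ≤ Real.sqrt (1-y) := by
          rcases le_or_gt (1 - (y/2 + y^2)) 0 with h | h
          · exact h.trans (Real.sqrt_nonneg _)
          · rw [Real.le_sqrt h.le (by nlinarith)]
            nlinarith
      _ ≤ Real.sqrt ((1-x)^d) := Real.sqrt_le_sqrt hbern
  -- (ii)  2e/u ≤ c √(M(1+M))
  obtain ⟨e, hedef⟩ : ∃ e : ℝ, e = Real.sqrt (1-1/(d:ℝ)) := ⟨_, rfl⟩
  obtain ⟨u, hudef⟩ : ∃ u : ℝ, u = Real.sqrt (2*ld) := ⟨_, rfl⟩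
  rw [← hedef, ← hudef]
  have hinvd : 1/(d:ℝ) ≤ 1/8 := by rw [div_le_div_iff₀ hdpos (by norm_num)]; linarith
  have he2 : e^2 = 1 - 1/(d:ℝ) := by rw [hedef]; exact Real.sq_sqrt (by linarith)
  have hu2 : u^2 = 2*ld := by rw [hudef]; exact Real.sq_sqrt (by linarith)
  have hupos : 0 < u := by rw [hudef]; exact Real.sqrt_pos.mpr (by linarith)
  have he0 : 0 ≤ e := by rw [hedef]; exact Real.sqrt_nonneg _
  have h2eu : 0 ≤ 2*e/u := div_nonneg (by linarith) hupos.le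
  have hterm : 2*e/u ≤ Real.sqrt (2*(d:ℝ)/((d:ℝ)-1)) *
      Real.sqrt (Mfun d m * (1 + Mfun d m)) := by
    have hcnn : (0:ℝ) ≤ 2*(d:ℝ)/((d:ℝ)-1) := div_nonneg (by linarith) (by linarith)
    rw [← Real.sqrt_mul hcnn]
    have hMM0 : 0 ≤ Mfun d m * (1 + Mfun d m) := by nlinarith
    rw [Real.le_sqrt h2eu (mul_nonneg hcnn hMM0)]
    have hlhs : (2*e/u)^2 = 2*(1-1/(d:ℝ))/ld := by
      rw [div_pow, mul_pow, he2, hu2]; field_simp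
    rw [hlhs]
    have hMM : ((d:ℝ)-1)*x ≤ Mfun d m * (1 + Mfun d m) := by nlinarith
    have hne1 : ((d:ℝ)-1) ≠ 0 := by linarith
    have hstep : 2*(d:ℝ)/((d:ℝ)-1) * (((d:ℝ)-1)*x) = 2/ld := by
      calc 2*(d:ℝ)/((d:ℝ)-1) * (((d:ℝ)-1)*x)
          = 2*(d:ℝ)*x * (((d:ℝ)-1)/((d:ℝ)-1)) := by ring
        _ = 2*(d:ℝ)*x := by rw [div_self hne1, mul_one]
        _ = 2/ld := by rw [hxdef]; field_simp
    calc 2*(1-1/(d:ℝ))/ld ≤ 2/ld := by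
          gcongr
          have h0d : 0 < 1/(d:ℝ) := by positivity
          linarith
      _ = 2*(d:ℝ)/((d:ℝ)-1) * (((d:ℝ)-1)*x) := hstep.symm
      _ ≤ 2*(d:ℝ)/((d:ℝ)-1) * (Mfun d m * (1 + Mfun d m)) :=
          mul_le_mul_of_nonneg_left hMM hcnn
  -- combine
  have hdelta : 1/(2*ld) + 1/ld^2 = y/2 + y^2 := by rw [hydef]; field_simp
  have h1d0 : 0 ≤ 1 - (y/2+y^2) := by nlinarith
  have hmain : (1 - (y/2+y^2)) * (lam + 2*e/u) ≤
      m^d * (lam + Real.sqrt (2*(d:ℝ)/((d:ℝ)-1)) *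
        Real.sqrt (Mfun d m * (1 + Mfun d m))) := by
    apply mul_le_mul hmd (by linarith) (by linarith) (pow_nonneg hm0.le d)
  rw [hdelta]
  exact hmain.trans hsup

-- U1
lemma pow_mul_one_sub_le (s : ℝ) (h0 : 0 ≤ s) (h1 : s ≤ 1) (k : ℕ) :
    ((k:ℝ)+1) * (s^k * (1-s)) ≤ 1 := by
  have hsum : ((k:ℝ)+1) * s^k ≤ ∑ i ∈ Finset.range (k+1), s^i := by
    calc ((k:ℝ)+1)*s^k = ∑ _i ∈ Finset.range (k+1), s^k := by
          rw [Finset.sum_const, Finset.card_range]; push_cast; ring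
      _ ≤ ∑ i ∈ Finset.range (k+1), s^i := by
          apply Finset.sum_le_sum
          intro i hi
          exact pow_le_pow_of_le_one h0 h1 (Nat.lt_succ_iff.mp (Finset.mem_range.mp hi))
  have hgeom := geom_sum_mul s (k+1)
  have hpw : 0 ≤ s^(k+1) := pow_nonneg h0 _
  nlinarith [mul_le_mul_of_nonneg_right hsum (by linarith : (0:ℝ) ≤ 1 - s)]

lemma sq_le_four (x : ℝ) (h0 : 0 ≤ x) (h16 : x^2 ≤ 16) : x ≤ 4 := by nlinarith

lemma le_of_sq_le_sq' (a b : ℝ) (h : a^2 ≤ b^2) (hb : 0 ≤ b) : a ≤ b := by nlinarith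

lemma half_lt_sq (x : ℝ) (h : 1/2 < x) : 1/4 < x^2 := by nlinarith

lemma amgm24 (lam z : ℝ) (hlam0 : 0 < lam) (hz : 0 ≤ z) :
    4*z ≤ lam*z^2/6 + 24/lam := by
  rw [← sub_nonneg]
  have k2 : lam * (lam*z^2/6 + 24/lam - 4*z) = (lam*z-12)^2/6 := by
    field_simp
    ring
  nlinarith [k2, sq_nonneg (lam*z-12), hlam0]

set_option maxHeartbeats 1000000 in
lemma aux_upper (d : ℕ) (hd : 8 ≤ d) (lam : ℝ) (hlam : 8 ≤ lam) :
    Lfun d lam ≤ lam + 24/lam := by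
  have hd8 : (8:ℝ) ≤ d := by exact_mod_cast hd
  have hlam0 : (0:ℝ) < lam := by linarith
  have h24 : (0:ℝ) ≤ 24/lam := by positivity
  haveI : Nonempty (Set.Ioc (0:ℝ) 1) := ⟨⟨1, by norm_num⟩⟩
  rw [Lfun]
  apply ciSup_le
  rintro ⟨t, ht0, ht1⟩
  simp only
  -- basic facts
  have hs0 : (0:ℝ) < t^2 := by positivity
  have hs1 : t^2 ≤ 1 := pow_le_one₀ (by positivity) (by nlinarith [sq_nonneg (t-1)])
  have ht2 : 0 ≤ 1 - t^2 := by linarith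
  have hM0 : 0 ≤ Mfun d t := by
    rw [Mfun]; exact div_nonneg (mul_nonneg (by linarith) ht2) (by positivity)
  have hMM0 : 0 ≤ Mfun d t * (1 + Mfun d t) := mul_nonneg hM0 (by linarith)
  have hc2 : (Real.sqrt (2*(d:ℝ)/((d:ℝ)-1)))^2 = 2*(d:ℝ)/((d:ℝ)-1) :=
    Real.sq_sqrt (div_nonneg (by linarith) (by linarith))
  have hc0 : 0 ≤ Real.sqrt (2*(d:ℝ)/((d:ℝ)-1)) := Real.sqrt_nonneg _
  have hcle : Real.sqrt (2*(d:ℝ)/((d:ℝ)-1)) ≤ 2 := by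
    calc Real.sqrt (2*(d:ℝ)/((d:ℝ)-1)) ≤ Real.sqrt 4 := by
          apply Real.sqrt_le_sqrt
          rw [div_le_iff₀ (by linarith)]
          linarith
      _ = 2 := by
          rw [show (4:ℝ) = 2^2 by norm_num, Real.sqrt_sq (by norm_num : (0:ℝ) ≤ 2)]
  have hX0 : 0 ≤ Real.sqrt (Mfun d t * (1 + Mfun d t)) := Real.sqrt_nonneg _
  have hX2 : (Real.sqrt (Mfun d t * (1 + Mfun d t)))^2 = Mfun d t * (1 + Mfun d t) :=
    Real.sq_sqrt hMM0
  have htd0 : 0 ≤ t^d := pow_nonneg ht0.le d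
  have htd1 : t^d ≤ 1 := pow_le_one₀ ht0.le ht1
  -- the noise bound : t^d * (c * √(M(1+M))) ≤ 4
  have hnoise : t^d * (Real.sqrt (2*(d:ℝ)/((d:ℝ)-1)) *
      Real.sqrt (Mfun d t * (1 + Mfun d t))) ≤ 4 := by
    have hsq : (t^d * (Real.sqrt (2*(d:ℝ)/((d:ℝ)-1)) *
        Real.sqrt (Mfun d t * (1 + Mfun d t))))^2
        = (t^2)^d * ((2*(d:ℝ)/((d:ℝ)-1)) * (Mfun d t * (1 + Mfun d t))) := by
      rw [mul_pow, mul_pow, hc2, hX2,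
        show (t^d)^2 = (t^2)^d by rw [← pow_mul, ← pow_mul, mul_comm]]
      all_goals ring
    -- identity : (t²)^d * (M(1+M)) = a s^{d-1}(1-s) + a² s^{d-2}(1-s)²  with s = t², a = d-1
    have hiden : (t^2)^d * (Mfun d t * (1 + Mfun d t))
        = ((d:ℝ)-1) * ((t^2)^(d-1) * (1-t^2))
          + ((d:ℝ)-1)^2 * ((t^2)^(d-2) * (1-t^2)^2) := by
      have e1 : (t^2)^d = (t^2)^(d-2) * (t^2)^2 := by rw [← pow_add]; congr 1; omega
      have e2 : (t^2)^(d-1) = (t^2)^(d-2) * (t^2) := by rw [← pow_succ]; congr 1; omega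
      rw [Mfun, e1, e2]
      field_simp
    have hP1 : ((d:ℝ)-1) * ((t^2)^(d-1) * (1-t^2)) ≤ 1 := by
      have h := pow_mul_one_sub_le (t^2) hs0.le hs1 (d-1)
      have hc : ((d-1:ℕ):ℝ) + 1 = (d:ℝ) := by
        rw [Nat.cast_sub (by omega : 1 ≤ d), Nat.cast_one]; ring
      rw [hc] at h
      have hnn : 0 ≤ (t^2)^(d-1) * (1-t^2) := mul_nonneg (by positivity) ht2
      have h2 : ((d:ℝ)-1) * ((t^2)^(d-1) * (1-t^2)) ≤ (d:ℝ) * ((t^2)^(d-1) * (1-t^2)) :=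
        mul_le_mul_of_nonneg_right (by linarith) hnn
      linarith
    have hP2 : ((d:ℝ)-1)^2 * ((t^2)^(d-2) * (1-t^2)^2) ≤ 4 := by
      set j := (d-2)/2 with hjdef
      have hj1 : 2*j ≤ d-2 := by omega
      have hj2 : d - 1 ≤ 2*j + 2 := by omega
      have hmono : (t^2)^(d-2) ≤ ((t^2)^j)^2 := by
        have h1 : (t^2)^(d-2) ≤ (t^2)^(2*j) := pow_le_pow_of_le_one hs0.le hs1 hj1
        have h2 : (t^2)^(2*j) = ((t^2)^j)^2 := by rw [mul_comm 2 j, pow_mul]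
        linarith [h1.trans_eq h2]
      have hU : ((j:ℝ)+1) * ((t^2)^j * (1-t^2)) ≤ 1 := pow_mul_one_sub_le (t^2) hs0.le hs1 j
      have hjr : ((d:ℝ)-1) ≤ 2*((j:ℝ)+1) := by
        have hj3 : d ≤ 2*j + 3 := by omega
        have : (d:ℝ) ≤ 2*(j:ℝ)+3 := by exact_mod_cast hj3
        linarith
      have hjnn : 0 ≤ (t^2)^j * (1-t^2) := mul_nonneg (by positivity) ht2
      have hkey : ((d:ℝ)-1) * ((t^2)^j * (1-t^2)) ≤ 2 := by
        calc ((d:ℝ)-1) * ((t^2)^j * (1-t^2)) ≤ 2*((j:ℝ)+1) * ((t^2)^j * (1-t^2)) :=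
              mul_le_mul_of_nonneg_right hjr hjnn
          _ = 2*(((j:ℝ)+1) * ((t^2)^j * (1-t^2))) := by ring
          _ ≤ 2 := by linarith
      calc ((d:ℝ)-1)^2 * ((t^2)^(d-2) * (1-t^2)^2)
          ≤ ((d:ℝ)-1)^2 * (((t^2)^j)^2 * (1-t^2)^2) := by
            apply mul_le_mul_of_nonneg_left _ (by positivity)
            exact mul_le_mul_of_nonneg_right hmono (by positivity)
        _ = (((d:ℝ)-1) * ((t^2)^j * (1-t^2)))^2 := by ring
        _ ≤ 2^2 := by
            apply sq_le_sq' _ hkey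
            linarith [mul_nonneg (by linarith : (0:ℝ) ≤ (d:ℝ)-1) hjnn]
        _ = 4 := by norm_num
    have hfrac : 2*(d:ℝ)/((d:ℝ)-1) ≤ 16/7 := by
      rw [div_le_div_iff₀ (by linarith) (by norm_num)]
      linarith
    have hsum0 : 0 ≤ (t^2)^d * (Mfun d t * (1 + Mfun d t)) := by positivity
    have hsqle : (t^d * (Real.sqrt (2*(d:ℝ)/((d:ℝ)-1)) *
        Real.sqrt (Mfun d t * (1 + Mfun d t))))^2 ≤ 16 := by
      rw [hsq]
      calc (t^2)^d * ((2*(d:ℝ)/((d:ℝ)-1)) * (Mfun d t * (1 + Mfun d t)))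
          = (2*(d:ℝ)/((d:ℝ)-1)) * ((t^2)^d * (Mfun d t * (1 + Mfun d t))) := by ring
        _ ≤ (16/7) * 5 := by
            apply mul_le_mul hfrac _ (by rw [hiden] at hsum0 ⊢; linarith) (by norm_num)
            rw [hiden]; linarith
        _ ≤ 16 := by norm_num
    exact sq_le_four _ (mul_nonneg htd0 (mul_nonneg hc0 hX0)) hsqle
  -- case split on t^d
  rcases le_or_gt (t^d) (1/2) with hcase | hcase
  · -- small t^d
    have : t^d * (lam + Real.sqrt (2*(d:ℝ)/((d:ℝ)-1)) *
        Real.sqrt (Mfun d t * (1 + Mfun d t)))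
        = t^d * lam + t^d * (Real.sqrt (2*(d:ℝ)/((d:ℝ)-1)) *
          Real.sqrt (Mfun d t * (1 + Mfun d t))) := by ring
    rw [this]
    have h1 : t^d * lam ≤ (1/2) * lam := mul_le_mul_of_nonneg_right hcase hlam0.le
    linarith
  · -- t^d > 1/2 :  M ≤ 3 regime
    have hane : ((d:ℝ)-1) ≠ 0 := by linarith
    have hMa : 1 + Mfun d t / ((d:ℝ)-1) = 1/t^2 := by
      rw [Mfun]; field_simp; ring
    have hban : 0 ≤ Mfun d t / ((d:ℝ)-1) := div_nonneg hM0 (by linarith)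
    have hbern : 1 + (d:ℝ) * (Mfun d t / ((d:ℝ)-1)) ≤ (1/t^2)^d := by
      rw [← hMa]
      exact one_add_mul_le_pow (by linarith) d
    have hinv : (1/t^2)^d = 1/(t^2)^d := by rw [div_pow]; norm_num
    have htd2 : (t^d)^2 = (t^2)^d := by rw [← pow_mul, ← pow_mul, mul_comm]
    have hs4 : 1/4 < (t^2)^d := by
      have := half_lt_sq _ hcase
      linarith [htd2 ▸ this]
    have hMd3 : (d:ℝ) * (Mfun d t / ((d:ℝ)-1)) < 3 := by
      have h4 : (1/t^2)^d < 4 := by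
        rw [hinv, div_lt_iff₀ (by positivity)]
        linarith
      linarith
    have hMd : Mfun d t ≤ (d:ℝ) * (Mfun d t / ((d:ℝ)-1)) := by
      have e : (d:ℝ) * (Mfun d t / ((d:ℝ)-1)) = Mfun d t * ((d:ℝ)/((d:ℝ)-1)) := by ring
      have h1 : 1 ≤ (d:ℝ)/((d:ℝ)-1) := by rw [le_div_iff₀ (by linarith)]; linarith
      calc Mfun d t = Mfun d t * 1 := by ring
        _ ≤ Mfun d t * ((d:ℝ)/((d:ℝ)-1)) := mul_le_mul_of_nonneg_left h1 hM0
        _ = (d:ℝ) * (Mfun d t / ((d:ℝ)-1)) := e.symm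
    have hM3 : Mfun d t ≤ 3 := by linarith
    have hsd : (t^d)^2 ≤ 1/(1 + Mfun d t) := by
      rw [htd2]
      have h1 : (0:ℝ) < 1 + (d:ℝ) * (Mfun d t / ((d:ℝ)-1)) := by positivity
      have h2 : (t^2)^d ≤ 1/(1 + (d:ℝ) * (Mfun d t / ((d:ℝ)-1))) := by
        rw [le_div_iff₀ h1]
        calc (t^2)^d * (1 + (d:ℝ) * (Mfun d t / ((d:ℝ)-1))) ≤ (t^2)^d * (1/t^2)^d :=
              mul_le_mul_of_nonneg_left hbern (by positivity)
          _ = 1 := by rw [hinv]; field_simp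
      calc (t^2)^d ≤ 1/(1 + (d:ℝ) * (Mfun d t / ((d:ℝ)-1))) := h2
        _ ≤ 1/(1 + Mfun d t) := by
            apply div_le_div_of_nonneg_left (by norm_num) (by linarith) ?_
            linarith
    have htdM : t^d ≤ 1 - Mfun d t/6 := by
      have h6 : (0:ℝ) ≤ 1 - Mfun d t/6 := by linarith
      have h1M : (0:ℝ) < 1 + Mfun d t := by linarith
      have hpoly : 1 ≤ (1 - Mfun d t/6)^2 * (1 + Mfun d t) := by
        nlinarith [mul_nonneg (by linarith : (0:ℝ) ≤ 3 - Mfun d t)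
          (by linarith : (0:ℝ) ≤ 8 - Mfun d t), hM0]
      have h3 : (t^d)^2 * (1 + Mfun d t) ≤ 1 := by
        have := (le_div_iff₀ h1M).mp hsd
        linarith
      have h2 : (t^d)^2 ≤ (1 - Mfun d t/6)^2 :=
        le_of_mul_le_mul_right (h3.trans hpoly) h1M
      exact le_of_sq_le_sq' _ _ h2 h6
    -- noise ≤ 4 √M
    have hXle : Real.sqrt (Mfun d t * (1 + Mfun d t)) ≤ 2 * Real.sqrt (Mfun d t) := by
      rw [show 2 * Real.sqrt (Mfun d t) = Real.sqrt 4 * Real.sqrt (Mfun d t) by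
            rw [show (4:ℝ) = 2^2 by norm_num, Real.sqrt_sq]; norm_num,
        ← Real.sqrt_mul (by norm_num)]
      apply Real.sqrt_le_sqrt
      linarith [mul_nonneg hM0 (by linarith : (0:ℝ) ≤ 3 - Mfun d t),
        (by ring : Mfun d t * (3 - Mfun d t) = 3*Mfun d t - Mfun d t^2),
        (by ring : Mfun d t * (1 + Mfun d t) = Mfun d t + Mfun d t^2)]
    have hnle : Real.sqrt (2*(d:ℝ)/((d:ℝ)-1)) * Real.sqrt (Mfun d t * (1 + Mfun d t))
        ≤ 4 * Real.sqrt (Mfun d t) := by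
      calc Real.sqrt (2*(d:ℝ)/((d:ℝ)-1)) * Real.sqrt (Mfun d t * (1 + Mfun d t))
          ≤ 2 * (2 * Real.sqrt (Mfun d t)) := by
            apply mul_le_mul hcle hXle hX0 (by norm_num)
        _ = 4 * Real.sqrt (Mfun d t) := by ring
    -- final AM-GM
    have hz2 : (Real.sqrt (Mfun d t))^2 = Mfun d t := Real.sq_sqrt hM0
    have hz0 : 0 ≤ Real.sqrt (Mfun d t) := Real.sqrt_nonneg _
    have hamgm := amgm24 lam (Real.sqrt (Mfun d t)) hlam0 hz0
    rw [hz2] at hamgm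
    calc t^d * (lam + Real.sqrt (2*(d:ℝ)/((d:ℝ)-1)) *
          Real.sqrt (Mfun d t * (1 + Mfun d t)))
        ≤ (1 - Mfun d t/6) * lam + 1 * (4 * Real.sqrt (Mfun d t)) := by
          have e : t^d * (lam + Real.sqrt (2*(d:ℝ)/((d:ℝ)-1)) *
              Real.sqrt (Mfun d t * (1 + Mfun d t)))
              = t^d * lam + t^d * (Real.sqrt (2*(d:ℝ)/((d:ℝ)-1)) *
                Real.sqrt (Mfun d t * (1 + Mfun d t))) := by ring
          rw [e]
          have h1 : t^d * lam ≤ (1 - Mfun d t/6) * lam :=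
            mul_le_mul_of_nonneg_right htdM hlam0.le
          have h2 : t^d * (Real.sqrt (2*(d:ℝ)/((d:ℝ)-1)) *
              Real.sqrt (Mfun d t * (1 + Mfun d t))) ≤ 1 * (4 * Real.sqrt (Mfun d t)) := by
            apply mul_le_mul htd1 hnle (mul_nonneg hc0 hX0) (by norm_num)
          linarith
      _ = lam - lam * Mfun d t/6 + 4 * Real.sqrt (Mfun d t) := by ring
      _ ≤ lam + 24/lam := by
          have : lam * Mfun d t/6 = lam * (Real.sqrt (Mfun d t)^2)/6 := by rw [hz2]
          linarith


lemma ident' (L lmb e : ℝ) (hL : 2 ≤ L) :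
    ((1 - (1/(2*L) + 1/L^2)) * (lmb + 2*e/Real.sqrt (2*L)))^2 - lmb^2
      = (1+4*(1/(2*L)))*((1/(2*L))+4*(1/(2*L))^2-2)*(lmb/Real.sqrt (2*L))^2
        + (1-(1/(2*L))-4*(1/(2*L))^2)^2
          *(4*(lmb/Real.sqrt (2*L))*e + 4*e^2*(1/(2*L))) := by
  obtain ⟨u, hudef⟩ : ∃ u : ℝ, u = Real.sqrt (2*L) := ⟨_, rfl⟩
  have hu0 : 0 < u := by rw [hudef]; exact Real.sqrt_pos.mpr (by linarith)
  have hu2 : u^2 = 2*L := by rw [hudef]; exact Real.sq_sqrt (by linarith)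
  have hLu : L = u^2/2 := by linarith
  rw [← hudef, hLu]
  have hu0' : u ≠ 0 := hu0.ne'
  field_simp
  ring

/-- **Asymptotic gain of the injective-norm lower bound.** If `λ_d ≥ 0` satisfies
`λ_d = √(2 log d) + o(√(log d))`, i.e. `λ_d/√(2 log d) → 1`, then
`liminf_{d→∞} (L_d(λ_d)² - λ_d²) ≥ 2`. -/
theorem Lfun_asymptotic_gain
    (lam : ℕ → ℝ) (hnonneg : ∀ d, 0 ≤ lam d)
    (hasymp : Tendsto (fun d : ℕ => lam d / Real.sqrt (2 * Real.log d)) atTop (nhds 1)) :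
    2 ≤ atTop.liminf (fun d : ℕ => (Lfun d (lam d))^2 - (lam d)^2) := by
  have hlogtop : Tendsto (fun d : ℕ => Real.log d) atTop atTop :=
    Real.tendsto_log_atTop.comp tendsto_natCast_atTop_atTop
  have hwlim : Tendsto (fun d : ℕ => 1/(2*Real.log d)) atTop (nhds 0) := by
    have h := (hlogtop.const_mul_atTop (by norm_num : (0:ℝ) < 2)).inv_tendsto_atTop
    exact Tendsto.congr (fun d => (one_div _).symm) h
  have helim : Tendsto (fun d : ℕ => Real.sqrt (1-1/(d:ℝ))) atTop (nhds 1) := by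
    have h1 : Tendsto (fun d : ℕ => 1-1/(d:ℝ)) atTop (nhds 1) := by
      simpa using (tendsto_const_nhds (x := (1:ℝ))).sub tendsto_one_div_atTop_nhds_zero_nat
    have := (Real.continuous_sqrt.continuousAt (x := (1:ℝ))).tendsto.comp h1
    simpa [Function.comp_def] using this
  have hasymp' : Tendsto (fun d : ℕ => lam d / Real.sqrt (2*Real.log d)) atTop (nhds 1) := by
    exact hasymp
  -- the explicit comparison sequence
  have hglim : Tendsto (fun d : ℕ =>
      (1+4*(1/(2*Real.log d)))*((1/(2*Real.log d))+4*(1/(2*Real.log d))^2-2)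
        *(lam d/Real.sqrt (2*Real.log d))^2
      + (1-(1/(2*Real.log d))-4*(1/(2*Real.log d))^2)^2
        *(4*(lam d/Real.sqrt (2*Real.log d))*Real.sqrt (1-1/(d:ℝ))
          + 4*Real.sqrt (1-1/(d:ℝ))^2*(1/(2*Real.log d)))) atTop (nhds 2) := by
    have A1 := tendsto_const_nhds (x := (1:ℝ)) (f := atTop (α := ℕ)) |>.add (hwlim.const_mul 4)
    have A2 := (hwlim.add ((hwlim.pow 2).const_mul 4)).sub
      (tendsto_const_nhds (x := (2:ℝ)) (f := atTop (α := ℕ)))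
    have A3 := hasymp'.pow 2
    have A4 := ((tendsto_const_nhds (x := (1:ℝ)) (f := atTop (α := ℕ))).sub hwlim).sub
      ((hwlim.pow 2).const_mul 4)
    have A5 := ((hasymp'.const_mul 4).mul helim).add (((helim.pow 2).const_mul 4).mul hwlim)
    have h := ((A1.mul A2).mul A3).add ((A4.pow 2).mul A5)
    norm_num at h
    convert h using 2
    norm_num
  -- eventually λ_d ≥ 8
  have hu16 : ∀ᶠ d : ℕ in atTop, 16 ≤ Real.sqrt (2*Real.log d) := by
    filter_upwards [hlogtop.eventually_ge_atTop 128] with d hld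
    calc (16:ℝ) = Real.sqrt 256 := by
          rw [show (256:ℝ) = 16^2 by norm_num, Real.sqrt_sq (by norm_num : (0:ℝ) ≤ 16)]
      _ ≤ Real.sqrt (2*Real.log d) := Real.sqrt_le_sqrt (by linarith)
  have hrhalf : ∀ᶠ d : ℕ in atTop, (1:ℝ)/2 ≤ lam d / Real.sqrt (2*Real.log d) :=
    hasymp'.eventually (eventually_ge_nhds (by norm_num : (1:ℝ)/2 < 1))
  have hlam8 : ∀ᶠ d : ℕ in atTop, 8 ≤ lam d := by
    filter_upwards [hu16, hrhalf] with d h16 hhalf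
    have hupos : (0:ℝ) < Real.sqrt (2*Real.log d) := by linarith
    have h2 : (1/2)*Real.sqrt (2*Real.log d) ≤ lam d := (le_div_iff₀ hupos).mp hhalf
    linarith
  -- eventual two-sided comparison
  have hev : ∀ᶠ d : ℕ in atTop,
      ((1+4*(1/(2*Real.log d)))*((1/(2*Real.log d))+4*(1/(2*Real.log d))^2-2)
        *(lam d/Real.sqrt (2*Real.log d))^2
      + (1-(1/(2*Real.log d))-4*(1/(2*Real.log d))^2)^2
        *(4*(lam d/Real.sqrt (2*Real.log d))*Real.sqrt (1-1/(d:ℝ))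
          + 4*Real.sqrt (1-1/(d:ℝ))^2*(1/(2*Real.log d))))
        ≤ (Lfun d (lam d))^2 - (lam d)^2
      ∧ (Lfun d (lam d))^2 - (lam d)^2 ≤ 57 := by
    filter_upwards [eventually_ge_atTop 8, hlam8] with d hd hl8
    have hld : 2 ≤ Real.log d := log_ge_two d hd
    have hu0 : (0:ℝ) < Real.sqrt (2*Real.log d) := Real.sqrt_pos.mpr (by linarith)
    have hid := ident' (Real.log d) (lam d) (Real.sqrt (1-1/(d:ℝ))) hld
    have hA := aux_lower d hd (lam d) (hnonneg d)
    have hA0 : 0 ≤ (1 - (1/(2*Real.log d) + 1/(Real.log d)^2)) *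
        (lam d + 2*Real.sqrt (1-1/(d:ℝ))/Real.sqrt (2*Real.log d)) := by
      apply mul_nonneg
      · have h1 : 1/(2*Real.log d) ≤ 1/4 := by
          rw [div_le_div_iff₀ (by linarith) (by norm_num)]; linarith
        have h2 : 1/(Real.log d)^2 ≤ 1/4 := by
          rw [div_le_div_iff₀ (by positivity) (by norm_num)]; nlinarith
        linarith
      · have h3 : 0 ≤ 2*Real.sqrt (1-1/(d:ℝ))/Real.sqrt (2*Real.log d) :=
          div_nonneg (by positivity) hu0.le
        linarith [hnonneg d]
    constructor
    · rw [← hid]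
      have hsq : ((1 - (1/(2*Real.log d) + 1/(Real.log d)^2)) *
          (lam d + 2*Real.sqrt (1-1/(d:ℝ))/Real.sqrt (2*Real.log d)))^2
          ≤ (Lfun d (lam d))^2 := pow_le_pow_left₀ hA0 hA 2
      linarith
    · have h1 := aux_upper d hd (lam d) hl8
      have h2 : 0 ≤ Lfun d (lam d) := hA0.trans hA
      have hl0 : (0:ℝ) < lam d := by linarith
      have h3 : (Lfun d (lam d))^2 ≤ (lam d + 24/lam d)^2 := pow_le_pow_left₀ h2 h1 2
      have h4 : (lam d + 24/lam d)^2 = (lam d)^2 + 48 + 576/(lam d)^2 := by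
        field_simp
        ring
      have h5 : 576/(lam d)^2 ≤ 9 := by
        rw [div_le_iff₀ (by positivity)]
        nlinarith
      linarith
  -- conclude
  have hbg : IsBoundedUnder (· ≥ ·) atTop _ := hglim.isBoundedUnder_ge
  have hcb : IsCoboundedUnder (· ≥ ·) atTop
      (fun d : ℕ => (Lfun d (lam d))^2 - (lam d)^2) := by
    apply Filter.IsBoundedUnder.isCoboundedUnder_ge
    refine ⟨57, ?_⟩
    rw [eventually_map]
    filter_upwards [hev] with d h
    exact h.2
  calc (2:ℝ) = atTop.liminf (fun d : ℕ =>
      (1+4*(1/(2*Real.log d)))*((1/(2*Real.log d))+4*(1/(2*Real.log d))^2-2)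
        *(lam d/Real.sqrt (2*Real.log d))^2
      + (1-(1/(2*Real.log d))-4*(1/(2*Real.log d))^2)^2
        *(4*(lam d/Real.sqrt (2*Real.log d))*Real.sqrt (1-1/(d:ℝ))
          + 4*Real.sqrt (1-1/(d:ℝ))^2*(1/(2*Real.log d)))) := hglim.liminf_eq.symm
    _ ≤ atTop.liminf (fun d : ℕ => (Lfun d (lam d))^2 - (lam d)^2) := by
        apply liminf_le_liminf _ hbg hcb
        filter_upwards [hev] with d h
        exact h.1

end
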